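/- arXiv:2010.04213 — 8 statements merged into one kernel-verified Lean document; each statement's English description precedes it below -/
import Mathlib

section
/- Assume Σ is reachable from a ground state x* and controllable to x* (for every state x there exists a trajectory steering x* to x and a trajectory steering x to x*). Then Σ is cyclo-dissipative with respect to x* if and only if for every state x, every trajectory from x to x* with supply S₁, and every trajectory from x* to x with supply S₂, one has S₁ + S₂ ≥ 0 (equivalently, F_ac(x) := sup{−supply : trajectories from x to x*} ≤ F_rc(x) := inf{supply : trajectories from x* to x} for all x). -/
open MeasureTheory

/-- A trajectory of the control system `ẋ = f(x,u)` with supply rate `s`,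
on an interval `[t₁, t₂]`. -/
structure Traj {n m : ℕ} (f : (Fin n → ℝ) → (Fin m → ℝ) → (Fin n → ℝ))
    (s : (Fin n → ℝ) → (Fin m → ℝ) → ℝ) where
  t₁ : ℝ
  t₂ : ℝ
  hle : t₁ ≤ t₂
  x : ℝ → Fin n → ℝ
  u : ℝ → Fin m → ℝ
  hu : Measurable u
  hx : Continuous x
  hf : IntervalIntegrable (fun t => f (x t) (u t)) volume t₁ t₂
  hs : IntervalIntegrable (fun t => s (x t) (u t)) volume t₁ t₂
  hdyn : ∀ t ∈ Set.Icc t₁ t₂, x t = x t₁ + ∫ τ in t₁..t, f (x τ) (u τ)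

/-- The supply of a trajectory. -/
noncomputable def Traj.supply {n m : ℕ} {f : (Fin n → ℝ) → (Fin m → ℝ) → (Fin n → ℝ)}
    {s : (Fin n → ℝ) → (Fin m → ℝ) → ℝ} (T : Traj f s) : ℝ :=
  ∫ t in T.t₁..T.t₂, s (T.x t) (T.u t)


section Aux
open intervalIntegral Set
set_option linter.unusedSectionVars false
set_option linter.unusedTactic false


set_option linter.unusedSectionVars false

variable {E : Type*} [NormedAddCommGroup E] [NormedSpace ℝ E]

lemma glue_integrable (F G : ℝ → E) {a c t : ℝ} (hac : a ≤ c) (hct : c ≤ t)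
    (hF : IntervalIntegrable F volume a c) (hG : IntervalIntegrable G volume c t) :
    IntervalIntegrable (fun τ => if τ ≤ c then F τ else G τ) volume a t := by
  refine IntervalIntegrable.trans (b := c) ?_ ?_
  · rw [intervalIntegrable_iff_integrableOn_Ioc_of_le hac] at hF ⊢
    exact hF.congr_fun (fun τ hτ => (if_pos hτ.2).symm) measurableSet_Ioc
  · rw [intervalIntegrable_iff_integrableOn_Ioc_of_le hct] at hG ⊢
    exact hG.congr_fun (fun τ hτ => (if_neg (not_le.2 hτ.1)).symm) measurableSet_Ioc

lemma glue_integral (F G : ℝ → E) {a c t : ℝ} (hac : a ≤ c) (hct : c ≤ t)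
    (hF : IntervalIntegrable F volume a c) (hG : IntervalIntegrable G volume c t) :
    ∫ τ in a..t, (if τ ≤ c then F τ else G τ) =
      (∫ τ in a..c, F τ) + ∫ τ in c..t, G τ := by
  have h1 : IntervalIntegrable (fun τ => if τ ≤ c then F τ else G τ) volume a c := by
    rw [intervalIntegrable_iff_integrableOn_Ioc_of_le hac] at hF ⊢
    exact hF.congr_fun (fun τ hτ => (if_pos hτ.2).symm) measurableSet_Ioc
  have h2 : IntervalIntegrable (fun τ => if τ ≤ c then F τ else G τ) volume c t := by
    rw [intervalIntegrable_iff_integrableOn_Ioc_of_le hct] at hG ⊢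
    exact hG.congr_fun (fun τ hτ => (if_neg (not_le.2 hτ.1)).symm) measurableSet_Ioc
  rw [← integral_add_adjacent_intervals h1 h2]
  congr 1
  · exact integral_congr fun τ hτ => by
      rw [uIcc_of_le hac] at hτ; exact if_pos hτ.2
  · refine integral_congr_ae ?_
    filter_upwards with τ hτ
    rw [uIoc_of_le hct] at hτ
    exact if_neg (not_le.2 hτ.1)




variable {n m : ℕ} {f : (Fin n → ℝ) → (Fin m → ℝ) → (Fin n → ℝ)}
    {s : (Fin n → ℝ) → (Fin m → ℝ) → ℝ} (A B : Traj f s) (hAB : A.x A.t₂ = B.x B.t₁)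

-- glued state/input
noncomputable def glueX : ℝ → Fin n → ℝ :=
  fun t => if t ≤ A.t₂ then A.x t else B.x (t + (B.t₁ - A.t₂))

noncomputable def glueU : ℝ → Fin m → ℝ :=
  fun t => if t ≤ A.t₂ then A.u t else B.u (t + (B.t₁ - A.t₂))

lemma glue_comp (g : (Fin n → ℝ) → (Fin m → ℝ) → E) :
    (fun t => g (glueX A B t) (glueU A B t)) =
      fun t => if t ≤ A.t₂ then g (A.x t) (A.u t)
        else g (B.x (t + (B.t₁ - A.t₂))) (B.u (t + (B.t₁ - A.t₂))) := by
  funext t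
  by_cases h : t ≤ A.t₂ <;> simp [glueX, glueU, h]

lemma shift_integrable (g : (Fin n → ℝ) → (Fin m → ℝ) → E)
    (hg : IntervalIntegrable (fun t => g (B.x t) (B.u t)) volume B.t₁ B.t₂) :
    IntervalIntegrable (fun t => g (B.x (t + (B.t₁ - A.t₂))) (B.u (t + (B.t₁ - A.t₂))))
      volume A.t₂ (A.t₂ + (B.t₂ - B.t₁)) := by
  have := hg.comp_add_right (B.t₁ - A.t₂)
  have e1 : B.t₁ - (B.t₁ - A.t₂) = A.t₂ := by ring
  have e2 : B.t₂ - (B.t₁ - A.t₂) = A.t₂ + (B.t₂ - B.t₁) := by ring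
  rwa [e1, e2] at this

noncomputable def Traj.concat : Traj f s where
  t₁ := A.t₁
  t₂ := A.t₂ + (B.t₂ - B.t₁)
  hle := by have := A.hle; have := B.hle; linarith
  x := glueX A B
  u := glueU A B
  hu := Measurable.ite (measurableSet_le measurable_id measurable_const) A.hu
    (B.hu.comp (measurable_id.add_const _))
  hx := by
    refine Continuous.if_le A.hx (B.hx.comp (continuous_id.add continuous_const))
      continuous_id continuous_const fun t ht => ?_
    subst ht
    simp [hAB]
  hf := by
    rw [glue_comp]
    exact glue_integrable _ _ A.hle (by have := B.hle; linarith) A.hf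
      (shift_integrable A B _ B.hf)
  hs := by
    rw [glue_comp]
    exact glue_integrable _ _ A.hle (by have := B.hle; linarith) A.hs
      (shift_integrable A B _ B.hs)
  hdyn := by
    intro t ht
    set c := A.t₂ with hc
    have hBle := B.hle
    have hxa : glueX A B A.t₁ = A.x A.t₁ := if_pos A.hle
    by_cases h : t ≤ c
    · have hx_t : glueX A B t = A.x t := if_pos h
      rw [hx_t, hxa, A.hdyn t ⟨ht.1, h⟩]
      congr 1
      rw [glue_comp]
      refine (integral_congr fun τ hτ => ?_).symm
      rw [uIcc_of_le ht.1] at hτ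
      exact if_pos (hτ.2.trans h)
    · push_neg at h
      have hct : c ≤ t := h.le
      have hG : IntervalIntegrable
          (fun τ => f (B.x (τ + (B.t₁ - c))) (B.u (τ + (B.t₁ - c)))) volume c t :=
        (shift_integrable A B _ B.hf).mono_set
          (by rw [uIcc_of_le hct, uIcc_of_le (by linarith)]; exact Icc_subset_Icc le_rfl ht.2)
      rw [glue_comp]
      rw [glue_integral _ _ A.hle hct A.hf hG]
      have hx_t : glueX A B t = B.x (t + (B.t₁ - c)) := if_neg (not_le.2 h)
      have hmem : t + (B.t₁ - c) ∈ Set.Icc B.t₁ B.t₂ := by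
        constructor <;> [linarith; linarith [ht.2]]
      have hB := B.hdyn _ hmem
      have hshift := integral_comp_add_right (a := c) (b := t)
        (fun τ => f (B.x τ) (B.u τ)) (B.t₁ - c)
      have e : c + (B.t₁ - c) = B.t₁ := by ring
      rw [e] at hshift
      rw [hx_t, hB, ← hshift, hxa, ← hAB, A.hdyn c ⟨A.hle, le_rfl⟩]
      abel

lemma Traj.concat_supply : (A.concat B hAB).supply = A.supply + B.supply := by
  show (∫ t in A.t₁..(A.t₂ + (B.t₂ - B.t₁)), s (glueX A B t) (glueU A B t)) = _
  rw [glue_comp]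
  rw [glue_integral _ _ A.hle (by have := B.hle; linarith) A.hs (shift_integrable A B _ B.hs)]
  unfold Traj.supply
  congr 1
  have h := integral_comp_add_right (a := A.t₂) (b := A.t₂ + (B.t₂ - B.t₁))
    (fun t => s (B.x t) (B.u t)) (B.t₁ - A.t₂)
  have e1 : A.t₂ + (B.t₁ - A.t₂) = B.t₁ := by ring
  have e2 : A.t₂ + (B.t₂ - B.t₁) + (B.t₁ - A.t₂) = B.t₂ := by ring
  rw [e1, e2] at h
  exact h

lemma Traj.concat_start : (A.concat B hAB).x (A.concat B hAB).t₁ = A.x A.t₁ :=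
  if_pos A.hle

lemma Traj.concat_end : (A.concat B hAB).x (A.concat B hAB).t₂ = B.x B.t₂ := by
  show glueX A B (A.t₂ + (B.t₂ - B.t₁)) = B.x B.t₂
  rcases eq_or_lt_of_le B.hle with h | h
  · have : A.t₂ + (B.t₂ - B.t₁) = A.t₂ := by rw [← h]; ring
    rw [this]
    simpa [glueX, hAB] using congrArg B.x h
  · have : ¬ A.t₂ + (B.t₂ - B.t₁) ≤ A.t₂ := by linarith
    rw [glueX, if_neg this]
    congr 1
    ring



end Aux

/-- `F` is a storage function: the dissipation inequality holds along all trajectories. -/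
def IsStorage {n m : ℕ} (f : (Fin n → ℝ) → (Fin m → ℝ) → (Fin n → ℝ))
    (s : (Fin n → ℝ) → (Fin m → ℝ) → ℝ) (F : (Fin n → ℝ) → ℝ) : Prop :=
  ∀ T : Traj f s, F (T.x T.t₂) - F (T.x T.t₁) ≤ T.supply

/-- Cyclo-dissipativity with respect to the ground state `xs`: nonnegative supply along
every trajectory beginning and ending at `xs`. -/
def CycloDissipativeWrt {n m : ℕ} (f : (Fin n → ℝ) → (Fin m → ℝ) → (Fin n → ℝ))
    (s : (Fin n → ℝ) → (Fin m → ℝ) → ℝ) (xs : Fin n → ℝ) : Prop :=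
  ∀ T : Traj f s, T.x T.t₁ = xs → T.x T.t₂ = xs → 0 ≤ T.supply

/-- The set of values `-supply` over trajectories from `x` to `xs`. -/
def Sac {n m : ℕ} (f : (Fin n → ℝ) → (Fin m → ℝ) → (Fin n → ℝ))
    (s : (Fin n → ℝ) → (Fin m → ℝ) → ℝ) (xs x : Fin n → ℝ) : Set ℝ :=
  {r : ℝ | ∃ T : Traj f s, T.x T.t₁ = x ∧ T.x T.t₂ = xs ∧ r = -T.supply}

/-- The set of values `supply` over trajectories from `xs` to `x`. -/
def Src {n m : ℕ} (f : (Fin n → ℝ) → (Fin m → ℝ) → (Fin n → ℝ))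
    (s : (Fin n → ℝ) → (Fin m → ℝ) → ℝ) (xs x : Fin n → ℝ) : Set ℝ :=
  {r : ℝ | ∃ T : Traj f s, T.x T.t₁ = xs ∧ T.x T.t₂ = x ∧ r = T.supply}

/-- Assuming reachability from and controllability to the ground state `xs`, the system is
cyclo-dissipative with respect to `xs` if and only if for every state `x`, every trajectory
from `x` to `xs` and every trajectory from `xs` to `x` have supplies summing to a
nonnegative number. -/
theorem cycloDissipativeWrt_iff {n m : ℕ}
    (f : (Fin n → ℝ) → (Fin m → ℝ) → (Fin n → ℝ))
    (s : (Fin n → ℝ) → (Fin m → ℝ) → ℝ)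
    (hfc : Continuous fun q : (Fin n → ℝ) × (Fin m → ℝ) => f q.1 q.2)
    (hsc : Continuous fun q : (Fin n → ℝ) × (Fin m → ℝ) => s q.1 q.2)
    (xs : Fin n → ℝ)
    (hreach : ∀ x : Fin n → ℝ, ∃ T : Traj f s, T.x T.t₁ = xs ∧ T.x T.t₂ = x)
    (hctrl : ∀ x : Fin n → ℝ, ∃ T : Traj f s, T.x T.t₁ = x ∧ T.x T.t₂ = xs) :
    CycloDissipativeWrt f s xs ↔
      ∀ (x : Fin n → ℝ) (T₁ T₂ : Traj f s),
        T₁.x T₁.t₁ = x → T₁.x T₁.t₂ = xs →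
        T₂.x T₂.t₁ = xs → T₂.x T₂.t₂ = x →
        0 ≤ T₁.supply + T₂.supply := by
  
  constructor
  · intro hcd x T₁ T₂ h11 h12 h21 h22
    have hAB : T₂.x T₂.t₂ = T₁.x T₁.t₁ := by rw [h22, h11]
    have h0 := hcd (T₂.concat T₁ hAB)
      (by rw [Traj.concat_start, h21]) (by rw [Traj.concat_end, h12])
    rw [Traj.concat_supply] at h0
    linarith
  · intro h T hT1 hT2
    have hconst : IntervalIntegrable (fun _ : ℝ => s xs 0) volume 0 0 :=
      intervalIntegrable_const
    have hconstf : IntervalIntegrable (fun _ : ℝ => f xs 0) volume 0 0 :=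
      intervalIntegrable_const
    let T₀ : Traj f s :=
      { t₁ := 0, t₂ := 0, hle := le_rfl, x := fun _ => xs, u := fun _ => 0
        hu := measurable_const, hx := continuous_const
        hf := hconstf, hs := hconst
        hdyn := fun t ht => by
          have : t = 0 := le_antisymm ht.2 ht.1
          simp [this] }
    have hs0 : T₀.supply = 0 := intervalIntegral.integral_same
    have := h xs T T₀ hT1 hT2 rfl rfl
    rw [hs0] at this
    linarith
end

section
/- Assume Σ is reachable from x* and controllable to x*, and that Σ is cyclo-dissipative with respect to x*. Then for every state x the set {−supply : trajectories from x to x*} is nonempty and bounded above and the set {supply : trajectories from x* to x} is nonempty and bounded below; the functions F_ac(x) := sup{−supply : trajectories from x to x*} and F_rc(x) := inf{supply : trajectories from x* to x} are real-valued storage functions with F_ac(x*) = F_rc(x*) = 0, and every storage function F satisfies F_ac(x) ≤ F(x) − F(x*) ≤ F_rc(x) for all x. -/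
open MeasureTheory

lemma glue_aux {E : Type*} [NormedAddCommGroup E] [NormedSpace ℝ E]
    (g₁ g₂ G : ℝ → E) (a b e : ℝ) (hab : a ≤ b) (hbe : b ≤ e)
    (hG₁ : ∀ t ≤ b, G t = g₁ t) (hG₂ : ∀ t, b < t → G t = g₂ t)
    (hi₁ : IntervalIntegrable g₁ volume a b) (hi₂ : IntervalIntegrable g₂ volume b e) :
    IntervalIntegrable G volume a e ∧
    (∀ t ∈ Set.Icc a b, (∫ τ in a..t, G τ) = ∫ τ in a..t, g₁ τ) ∧
    (∀ t ∈ Set.Icc b e, (∫ τ in a..t, G τ) = (∫ τ in a..b, g₁ τ) + ∫ τ in b..t, g₂ τ) := by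
  have key₁ : ∀ t ∈ Set.Icc a b, IntervalIntegrable G volume a t ∧
      (∫ τ in a..t, G τ) = ∫ τ in a..t, g₁ τ := by
    intro t ht
    have he : Set.EqOn G g₁ (Set.uIcc a t) := by
      intro τ hτ
      rw [Set.uIcc_of_le ht.1] at hτ
      exact hG₁ τ (hτ.2.trans ht.2)
    constructor
    · refine (hi₁.mono_set ?_).congr_ae ?_
      · rw [Set.uIcc_of_le ht.1, Set.uIcc_of_le hab]; exact Set.Icc_subset_Icc le_rfl ht.2
      · refine (ae_restrict_iff' measurableSet_uIoc).mpr (ae_of_all _ fun τ hτ => ?_)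
        exact (he (Set.uIoc_subset_uIcc hτ)).symm
    · exact intervalIntegral.integral_congr he
  have key₂ : ∀ t ∈ Set.Icc b e, IntervalIntegrable G volume b t ∧
      (∫ τ in b..t, G τ) = ∫ τ in b..t, g₂ τ := by
    intro t ht
    have he : ∀ᵐ τ ∂(volume : Measure ℝ), τ ∈ Set.uIoc b t → G τ = g₂ τ := by
      refine ae_of_all _ fun τ hτ => ?_
      rw [Set.uIoc_of_le ht.1] at hτ
      exact hG₂ τ hτ.1
    constructor
    · refine (hi₂.mono_set ?_).congr_ae
        (Filter.EventuallyEq.symm ((ae_restrict_iff' measurableSet_uIoc).mpr he))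
      rw [Set.uIcc_of_le ht.1, Set.uIcc_of_le (ht.1.trans ht.2)]
      exact Set.Icc_subset_Icc le_rfl ht.2
    · exact intervalIntegral.integral_congr_ae he
  have hIab := (key₁ b ⟨hab, le_rfl⟩).1
  refine ⟨hIab.trans (key₂ e ⟨hbe, le_rfl⟩).1, fun t ht => (key₁ t ht).2, fun t ht => ?_⟩
  rw [← intervalIntegral.integral_add_adjacent_intervals hIab (key₂ t ht).1,
    (key₁ b ⟨hab, le_rfl⟩).2, (key₂ t ht).2]

/-- Concatenation of trajectories. -/
lemma traj_concat {n m : ℕ} {f : (Fin n → ℝ) → (Fin m → ℝ) → (Fin n → ℝ)}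
    {s : (Fin n → ℝ) → (Fin m → ℝ) → ℝ} (T₁ T₂ : Traj f s) (h : T₁.x T₁.t₂ = T₂.x T₂.t₁) :
    ∃ T : Traj f s, T.x T.t₁ = T₁.x T₁.t₁ ∧ T.x T.t₂ = T₂.x T₂.t₂ ∧
      T.supply = T₁.supply + T₂.supply := by
  set a := T₁.t₁
  set b := T₁.t₂
  set c := T₂.t₁
  set d := T₂.t₂
  set sh := c - b with hsh
  set e := b + (d - c) with he
  have hbe : b ≤ e := by have := T₂.hle; simp only [he]; linarith
  have hbsh : b + sh = c := by simp only [hsh]; try ring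
  have hesh : e + sh = d := by simp only [he, hsh]; try ring
  set X : ℝ → Fin n → ℝ := fun t => if t ≤ b then T₁.x t else T₂.x (t + sh) with hX
  set U : ℝ → Fin m → ℝ := fun t => if t ≤ b then T₁.u t else T₂.u (t + sh) with hU
  have hXb : T₁.x b = T₂.x (b + sh) := by rw [hbsh]; exact h
  have hXcont : Continuous X := by
    refine Continuous.if_le T₁.hx (T₂.hx.comp (continuous_id.add continuous_const))
      continuous_id continuous_const fun t ht => ?_
    rw [ht]; exact hXb
  have hUmeas : Measurable U := by
    refine Measurable.ite (measurableSet_le measurable_id measurable_const) T₁.hu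
      (T₂.hu.comp (measurable_id.add_const _))
  have hX₁ : ∀ t ≤ b, X t = T₁.x t := fun t ht => if_pos ht
  have hX₂ : ∀ t, b < t → X t = T₂.x (t + sh) := fun t ht => if_neg (not_le.mpr ht)
  have hU₁ : ∀ t ≤ b, U t = T₁.u t := fun t ht => if_pos ht
  have hU₂ : ∀ t, b < t → U t = T₂.u (t + sh) := fun t ht => if_neg (not_le.mpr ht)
  -- generic gluing for any integrand
  have main : ∀ {E : Type} [inst : NormedAddCommGroup E] [inst2 : NormedSpace ℝ E]
      (g : (Fin n → ℝ) → (Fin m → ℝ) → E),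
      IntervalIntegrable (fun t => g (T₁.x t) (T₁.u t)) volume a b →
      IntervalIntegrable (fun t => g (T₂.x t) (T₂.u t)) volume c d →
      IntervalIntegrable (fun t => g (X t) (U t)) volume a e ∧
      (∀ t ∈ Set.Icc a b, (∫ τ in a..t, g (X τ) (U τ)) = ∫ τ in a..t, g (T₁.x τ) (T₁.u τ)) ∧
      (∀ t ∈ Set.Icc b e, (∫ τ in a..t, g (X τ) (U τ)) =
        (∫ τ in a..b, g (T₁.x τ) (T₁.u τ)) + ∫ τ in c..(t + sh), g (T₂.x τ) (T₂.u τ)) := by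
    intro E _ _ g hg₁ hg₂
    have hshift : IntervalIntegrable (fun t => g (T₂.x (t + sh)) (T₂.u (t + sh))) volume b e := by
      have := hg₂.comp_add_right sh
      have h1 : c - sh = b := by rw [hsh]; try ring
      have h2 : d - sh = e := by rw [hsh, he]; try ring
      rwa [h1, h2] at this
    obtain ⟨hI, hL, hR⟩ := glue_aux (fun t => g (T₁.x t) (T₁.u t))
      (fun t => g (T₂.x (t + sh)) (T₂.u (t + sh))) (fun t => g (X t) (U t)) a b e T₁.hle hbe
      (fun t ht => by simp only [hX₁ t ht, hU₁ t ht]) (fun t ht => by simp only [hX₂ t ht, hU₂ t ht])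
      hg₁ hshift
    refine ⟨hI, hL, fun t ht => ?_⟩
    rw [hR t ht]
    congr 1
    rw [← hbsh]
    exact intervalIntegral.integral_comp_add_right (fun τ => g (T₂.x τ) (T₂.u τ)) sh
  obtain ⟨hfI, hfL, hfR⟩ := main f T₁.hf T₂.hf
  obtain ⟨hsI, _, hsR⟩ := main s T₁.hs T₂.hs
  have hdyn : ∀ t ∈ Set.Icc a e, X t = X a + ∫ τ in a..t, f (X τ) (U τ) := by
    intro t ht
    have hXa : X a = T₁.x a := hX₁ a T₁.hle
    rcases le_or_gt t b with htb | htb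
    · rw [hX₁ t htb, hfL t ⟨ht.1, htb⟩, hXa]
      exact T₁.hdyn t ⟨ht.1, htb⟩
    · rw [hX₂ t htb, hfR t ⟨htb.le, ht.2⟩, hXa]
      have hmem : t + sh ∈ Set.Icc c d := by
        constructor
        · rw [← hbsh]; linarith
        · rw [← hesh]; linarith [ht.2]
      rw [T₂.hdyn (t + sh) hmem, ← h, T₁.hdyn b ⟨T₁.hle, le_rfl⟩]
      abel
  refine ⟨⟨a, e, T₁.hle.trans hbe, X, U, hUmeas, hXcont, hfI, hsI, hdyn⟩, ?_, ?_, ?_⟩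
  · exact hX₁ a T₁.hle
  · show X e = _
    rcases eq_or_lt_of_le hbe with hbe' | hbe'
    · have hcd : c = d := by simp only [he] at hbe'; linarith
      rw [← hbe', hX₁ b le_rfl, h, hcd]
    · rw [hX₂ e hbe', hesh]
  · show (∫ t in a..e, s (X t) (U t)) = _
    rw [hsR e ⟨hbe, le_rfl⟩, hesh]
    rfl

/-- The trivial (degenerate) trajectory at a point. -/
lemma traj_triv {n m : ℕ} {f : (Fin n → ℝ) → (Fin m → ℝ) → (Fin n → ℝ)}
    {s : (Fin n → ℝ) → (Fin m → ℝ) → ℝ} (x0 : Fin n → ℝ) :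
    ∃ T : Traj f s, T.x T.t₁ = x0 ∧ T.x T.t₂ = x0 ∧ T.supply = 0 := by
  refine ⟨⟨0, 0, le_rfl, fun _ => x0, fun _ => 0, measurable_const, continuous_const,
    IntervalIntegrable.refl, IntervalIntegrable.refl, ?_⟩, rfl, rfl, ?_⟩
  · intro t ht
    simp only [Set.mem_Icc] at ht
    have : t = 0 := le_antisymm ht.2 ht.1
    simp [this]
  · show (∫ _ in (0:ℝ)..0, _) = 0
    simp


/-- If the system is reachable from and controllable to `xs` and cyclo-dissipative with
respect to `xs`, then the sets defining `F_ac` and `F_rc` are nonempty and bounded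
(above, resp. below), `F_ac := sSup (Sac ·)` and `F_rc := sInf (Src ·)` are storage
functions vanishing at `xs`, and every storage function `F` satisfies
`F_ac x ≤ F x - F xs ≤ F_rc x`. -/
theorem availableStorage_requiredSupply_are_storage {n m : ℕ}
    (f : (Fin n → ℝ) → (Fin m → ℝ) → (Fin n → ℝ))
    (s : (Fin n → ℝ) → (Fin m → ℝ) → ℝ)
    (hfc : Continuous fun q : (Fin n → ℝ) × (Fin m → ℝ) => f q.1 q.2)
    (hsc : Continuous fun q : (Fin n → ℝ) × (Fin m → ℝ) => s q.1 q.2)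
    (xs : Fin n → ℝ)
    (hreach : ∀ x : Fin n → ℝ, ∃ T : Traj f s, T.x T.t₁ = xs ∧ T.x T.t₂ = x)
    (hctrl : ∀ x : Fin n → ℝ, ∃ T : Traj f s, T.x T.t₁ = x ∧ T.x T.t₂ = xs)
    (hdis : CycloDissipativeWrt f s xs) :
    (∀ x, (Sac f s xs x).Nonempty ∧ BddAbove (Sac f s xs x) ∧
      (Src f s xs x).Nonempty ∧ BddBelow (Src f s xs x)) ∧
    IsStorage f s (fun x => sSup (Sac f s xs x)) ∧
    IsStorage f s (fun x => sInf (Src f s xs x)) ∧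
    sSup (Sac f s xs xs) = 0 ∧ sInf (Src f s xs xs) = 0 ∧
    (∀ F : (Fin n → ℝ) → ℝ, IsStorage f s F →
      ∀ x, sSup (Sac f s xs x) ≤ F x - F xs ∧ F x - F xs ≤ sInf (Src f s xs x)) := by
  -- every element of Sac is ≤ every element of Src
  have hle : ∀ x, ∀ r ∈ Sac f s xs x, ∀ r' ∈ Src f s xs x, r ≤ r' := by
    rintro x r ⟨T₂, h1, h2, h3⟩ r' ⟨T₁, h1', h2', h3'⟩
    obtain ⟨T, hA, hB, hC⟩ := traj_concat T₁ T₂ (by rw [h2', h1])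
    have h0 := hdis T (by rw [hA, h1']) (by rw [hB, h2])
    rw [hC] at h0
    rw [h3, h3']
    linarith
  have hne : ∀ x, (Sac f s xs x).Nonempty := fun x => by
    obtain ⟨T, h1, h2⟩ := hctrl x
    exact ⟨-T.supply, T, h1, h2, rfl⟩
  have hne' : ∀ x, (Src f s xs x).Nonempty := fun x => by
    obtain ⟨T, h1, h2⟩ := hreach x
    exact ⟨T.supply, T, h1, h2, rfl⟩
  have hba : ∀ x, BddAbove (Sac f s xs x) := fun x => by
    obtain ⟨r', hr'⟩ := hne' x
    exact ⟨r', fun r hr => hle x r hr r' hr'⟩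
  have hbb : ∀ x, BddBelow (Src f s xs x) := fun x => by
    obtain ⟨r, hr⟩ := hne x
    exact ⟨r, fun r' hr' => hle x r hr r' hr'⟩
  obtain ⟨T0, hT01, hT02, hT0s⟩ := traj_triv (f := f) (s := s) xs
  have hSup0 : sSup (Sac f s xs xs) = 0 := by
    refine le_antisymm (csSup_le (hne xs) ?_) (le_csSup (hba xs) ⟨T0, hT01, hT02, by rw [hT0s]; ring⟩)
    rintro r ⟨T, h1, h2, h3⟩
    have := hdis T h1 h2
    rw [h3]; linarith
  have hInf0 : sInf (Src f s xs xs) = 0 := by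
    refine le_antisymm (csInf_le (hbb xs) ⟨T0, hT01, hT02, hT0s.symm⟩) (le_csInf (hne' xs) ?_)
    rintro r ⟨T, h1, h2, h3⟩
    have := hdis T h1 h2
    rw [h3]; linarith
  refine ⟨fun x => ⟨hne x, hba x, hne' x, hbb x⟩, ?_, ?_, hSup0, hInf0, ?_⟩
  · -- F_ac is storage
    intro T
    simp only
    rw [sub_le_iff_le_add]
    refine csSup_le (hne _) ?_
    rintro r ⟨T₂, h1, h2, h3⟩
    obtain ⟨T', hA, hB, hC⟩ := traj_concat T T₂ (by rw [h1])
    have hmem : -(T.supply + T₂.supply) ∈ Sac f s xs (T.x T.t₁) := ⟨T', hA, by rw [hB, h2], by rw [hC]⟩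
    have := le_csSup (hba _) hmem
    rw [h3]; linarith
  · -- F_rc is storage
    intro T
    simp only
    have step : ∀ r ∈ Src f s xs (T.x T.t₁), sInf (Src f s xs (T.x T.t₂)) ≤ r + T.supply := by
      rintro r ⟨T₁, h1, h2, h3⟩
      obtain ⟨T', hA, hB, hC⟩ := traj_concat T₁ T (by rw [h2])
      have hmem : T₁.supply + T.supply ∈ Src f s xs (T.x T.t₂) := ⟨T', by rw [hA, h1], hB, hC.symm⟩
      have := csInf_le (hbb _) hmem
      rw [h3]; linarith
    have key := le_csInf (hne' (T.x T.t₁))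
      (fun r hr => sub_le_iff_le_add.mpr (step r hr))
    linarith
  · -- extremality
    intro F hF x
    constructor
    · refine csSup_le (hne x) ?_
      rintro r ⟨T, h1, h2, h3⟩
      have := hF T
      rw [h1, h2] at this
      rw [h3]; linarith
    · refine le_csInf (hne' x) ?_
      rintro r ⟨T, h1, h2, h3⟩
      have := hF T
      rw [h1, h2] at this
      rw [h3]; linarith
end

section
/- The system Σ admits a nonnegative storage function if and only if the available storage F_a(x) := sup{−supply : trajectories of Σ on some [0,T], T ≥ 0, with x(0) = x} is finite for every state x. Moreover F_a(x) ≥ 0 for all x, and if F_a is finite everywhere then F_a is itself a nonnegative storage function and is minimal among nonnegative storage functions: F_a(x) ≤ F(x) for every nonnegative storage function F and every x. -/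
open MeasureTheory

/-- The set of values `-supply` over trajectories on some interval `[0, T]` starting at `x`,
whose supremum is the available storage `F_a(x)`. -/
def Sa {n m : ℕ} (f : (Fin n → ℝ) → (Fin m → ℝ) → (Fin n → ℝ))
    (s : (Fin n → ℝ) → (Fin m → ℝ) → ℝ) (x : Fin n → ℝ) : Set ℝ :=
  {r : ℝ | ∃ T : Traj f s, T.t₁ = 0 ∧ T.x 0 = x ∧ r = -T.supply}

section Helpers

variable {E : Type*} [NormedAddCommGroup E] [NormedSpace ℝ E]

lemma ae_ne_point (c : ℝ) : ∀ᵐ t : ℝ, t ≠ c := by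
  rw [MeasureTheory.ae_iff]
  refine measure_mono_null (fun t ht => ?_) (measure_singleton c)
  simpa using not_not.mp ht

lemma II_congr_on {g₁ g₂ : ℝ → E} {a b : ℝ} (c : ℝ)
    (h : ∀ t ∈ Set.uIoc a b, t ≠ c → g₁ t = g₂ t)
    (hi : IntervalIntegrable g₁ volume a b) : IntervalIntegrable g₂ volume a b := by
  rw [intervalIntegrable_iff] at hi ⊢
  refine hi.congr ?_
  have h0 : ∀ᵐ t ∂(volume.restrict (Set.uIoc a b)), t ≠ c := ae_restrict_of_ae (ae_ne_point c)
  have h1 : ∀ᵐ t ∂(volume.restrict (Set.uIoc a b)), t ∈ Set.uIoc a b :=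
    ae_restrict_mem measurableSet_uIoc
  filter_upwards [h0, h1] with t ht hm
  exact h t hm ht

lemma intgl_congr_on {g₁ g₂ : ℝ → E} {a b : ℝ} (c : ℝ)
    (h : ∀ t ∈ Set.uIoc a b, t ≠ c → g₁ t = g₂ t) :
    ∫ t in a..b, g₁ t = ∫ t in a..b, g₂ t := by
  apply intervalIntegral.integral_congr_ae
  filter_upwards [ae_ne_point c] with t ht hm
  exact h t hm ht

end Helpers

section Aux

variable {n m : ℕ} {f : (Fin n → ℝ) → (Fin m → ℝ) → (Fin n → ℝ)}
  {s : (Fin n → ℝ) → (Fin m → ℝ) → ℝ}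

/-- The degenerate trajectory at a point. -/
def trivTraj (f : (Fin n → ℝ) → (Fin m → ℝ) → (Fin n → ℝ))
    (s : (Fin n → ℝ) → (Fin m → ℝ) → ℝ) (x₀ : Fin n → ℝ) : Traj f s where
  t₁ := 0
  t₂ := 0
  hle := le_refl 0
  x := fun _ => x₀
  u := fun _ => 0
  hu := measurable_const
  hx := continuous_const
  hf := intervalIntegrable_const
  hs := intervalIntegrable_const
  hdyn := by
    intro t ht
    have : t = 0 := le_antisymm ht.2 ht.1
    subst this
    simp

lemma zero_mem_Sa (x : Fin n → ℝ) : (0 : ℝ) ∈ Sa f s x :=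
  ⟨trivTraj f s x, rfl, rfl, by simp [Traj.supply, trivTraj]⟩

/-- Concatenated state. -/
noncomputable def catX (T T' : Traj f s) : ℝ → Fin n → ℝ :=
  fun t => if t ≤ T.t₂ - T.t₁ then T.x (t + T.t₁) else T'.x (t - (T.t₂ - T.t₁))

/-- Concatenated input. -/
noncomputable def catU (T T' : Traj f s) : ℝ → Fin m → ℝ :=
  fun t => if t < T.t₂ - T.t₁ then T.u (t + T.t₁) else T'.u (t - (T.t₂ - T.t₁))

lemma catX_left (T T' : Traj f s) {t : ℝ} (ht : t ≤ T.t₂ - T.t₁) :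
    catX T T' t = T.x (t + T.t₁) := if_pos ht

lemma catX_right (T T' : Traj f s) (h2 : T'.x 0 = T.x T.t₂) {t : ℝ}
    (ht : T.t₂ - T.t₁ ≤ t) : catX T T' t = T'.x (t - (T.t₂ - T.t₁)) := by
  rcases eq_or_lt_of_le ht with h | h
  · rw [catX, ← h, sub_self, if_pos le_rfl, sub_add_cancel, h2]
  · exact if_neg (not_le.2 h)

lemma catU_right (T T' : Traj f s) {t : ℝ} (ht : T.t₂ - T.t₁ ≤ t) :
    catU T T' t = T'.u (t - (T.t₂ - T.t₁)) := if_neg (not_lt.2 ht)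

/-- The concatenated trajectory agrees with the shifted first trajectory,
composed with any `g`, off the junction point. -/
lemma cat_eq_left {E : Type*} (g : (Fin n → ℝ) → (Fin m → ℝ) → E)
    (T T' : Traj f s) {t : ℝ} (ht : t ≤ T.t₂ - T.t₁) (hne : t ≠ T.t₂ - T.t₁) :
    g (catX T T' t) (catU T T' t) = g (T.x (t + T.t₁)) (T.u (t + T.t₁)) := by
  rw [catX_left T T' ht, catU, if_pos (lt_of_le_of_ne ht hne)]

lemma cat_eq_right {E : Type*} (g : (Fin n → ℝ) → (Fin m → ℝ) → E)
    (T T' : Traj f s) (h2 : T'.x 0 = T.x T.t₂) {t : ℝ} (ht : T.t₂ - T.t₁ ≤ t) :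
    g (catX T T' t) (catU T T' t)
      = g (T'.x (t - (T.t₂ - T.t₁))) (T'.u (t - (T.t₂ - T.t₁))) := by
  rw [catX_right T T' h2 ht, catU_right T T' ht]

section CatInt

variable {E : Type*} [NormedAddCommGroup E] [NormedSpace ℝ E]

lemma cat_II_left (g : (Fin n → ℝ) → (Fin m → ℝ) → E) (T T' : Traj f s)
    (hI : IntervalIntegrable (fun t => g (T.x t) (T.u t)) volume T.t₁ T.t₂) :
    IntervalIntegrable (fun t => g (catX T T' t) (catU T T' t)) volume 0 (T.t₂ - T.t₁) := by
  have h := hI.comp_add_right T.t₁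
  rw [sub_self] at h
  refine II_congr_on (T.t₂ - T.t₁) (fun t htm hne => ?_) h
  have h0 : (0:ℝ) ≤ T.t₂ - T.t₁ := sub_nonneg.2 T.hle
  rw [Set.uIoc_of_le h0] at htm
  exact (cat_eq_left g T T' htm.2 hne).symm

lemma cat_intgl_left (g : (Fin n → ℝ) → (Fin m → ℝ) → E) (T T' : Traj f s)
    {r : ℝ} (h0r : 0 ≤ r) (hr : r ≤ T.t₂ - T.t₁) :
    ∫ t in (0:ℝ)..r, g (catX T T' t) (catU T T' t)
      = ∫ t in T.t₁..(r + T.t₁), g (T.x t) (T.u t) := by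
  have h1 : ∫ t in (0:ℝ)..r, g (catX T T' t) (catU T T' t)
      = ∫ t in (0:ℝ)..r, g (T.x (t + T.t₁)) (T.u (t + T.t₁)) := by
    refine intgl_congr_on (T.t₂ - T.t₁) (fun t htm hne => ?_)
    rw [Set.uIoc_of_le h0r] at htm
    exact cat_eq_left g T T' (htm.2.trans hr) hne
  have h3 := intervalIntegral.integral_comp_add_right (a := 0) (b := r)
    (fun t => g (T.x t) (T.u t)) T.t₁
  rw [zero_add] at h3
  rw [h1]
  exact h3

lemma cat_II_right (g : (Fin n → ℝ) → (Fin m → ℝ) → E) (T T' : Traj f s)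
    (h1 : T'.t₁ = 0) (h2 : T'.x 0 = T.x T.t₂)
    (hI : IntervalIntegrable (fun t => g (T'.x t) (T'.u t)) volume T'.t₁ T'.t₂) :
    IntervalIntegrable (fun t => g (catX T T' t) (catU T T' t)) volume
      (T.t₂ - T.t₁) (T.t₂ - T.t₁ + T'.t₂) := by
  rw [h1] at hI
  have h := hI.comp_sub_right (T.t₂ - T.t₁)
  rw [zero_add] at h
  rw [add_comm (T.t₂ - T.t₁) T'.t₂]
  refine II_congr_on (T.t₂ - T.t₁) (fun t htm _ => ?_) h
  have h0 : 0 ≤ T'.t₂ := h1 ▸ T'.hle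
  rw [Set.uIoc_of_le (le_add_of_nonneg_left (by linarith [sub_nonneg.2 T.hle]) :
    (T.t₂ - T.t₁) ≤ T'.t₂ + (T.t₂ - T.t₁))] at htm
  exact (cat_eq_right g T T' h2 htm.1.le).symm

lemma cat_intgl_right (g : (Fin n → ℝ) → (Fin m → ℝ) → E) (T T' : Traj f s)
    (h2 : T'.x 0 = T.x T.t₂) {r : ℝ} (hr : T.t₂ - T.t₁ ≤ r) :
    ∫ t in (T.t₂ - T.t₁)..r, g (catX T T' t) (catU T T' t)
      = ∫ t in (0:ℝ)..(r - (T.t₂ - T.t₁)), g (T'.x t) (T'.u t) := by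
  have h1 : ∫ t in (T.t₂ - T.t₁)..r, g (catX T T' t) (catU T T' t)
      = ∫ t in (T.t₂ - T.t₁)..r,
          g (T'.x (t - (T.t₂ - T.t₁))) (T'.u (t - (T.t₂ - T.t₁))) := by
    refine intgl_congr_on (T.t₂ - T.t₁) (fun t htm _ => ?_)
    rw [Set.uIoc_of_le hr] at htm
    exact cat_eq_right g T T' h2 htm.1.le
  have h3 := intervalIntegral.integral_comp_sub_right (a := T.t₂ - T.t₁) (b := r)
    (fun t => g (T'.x t) (T'.u t)) (T.t₂ - T.t₁)
  rw [sub_self] at h3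
  rw [h1]
  exact h3

end CatInt

lemma exists_concat (T T' : Traj f s) (h1 : T'.t₁ = 0) (h2 : T'.x 0 = T.x T.t₂) :
    ∃ Tc : Traj f s, Tc.t₁ = 0 ∧ Tc.x 0 = T.x T.t₁ ∧
      Tc.supply = T.supply + T'.supply := by
  have hd0 : (0:ℝ) ≤ T.t₂ - T.t₁ := sub_nonneg.2 T.hle
  have hT'0 : 0 ≤ T'.t₂ := h1 ▸ T'.hle
  have hdL : T.t₂ - T.t₁ ≤ T.t₂ - T.t₁ + T'.t₂ := le_add_of_nonneg_right hT'0
  have hIf₁ := cat_II_left f T T' T.hf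
  have hIs₁ := cat_II_left s T T' T.hs
  have hIf₂ := cat_II_right f T T' h1 h2 T'.hf
  have hIs₂ := cat_II_right s T T' h1 h2 T'.hs
  have hX0 : catX T T' 0 = T.x T.t₁ := by
    rw [catX_left T T' hd0, zero_add]
  refine ⟨⟨0, T.t₂ - T.t₁ + T'.t₂, le_trans hd0 hdL, catX T T', catU T T', ?_, ?_,
      hIf₁.trans hIf₂, hIs₁.trans hIs₂, ?_⟩, rfl, hX0, ?_⟩
  · -- measurability of catU
    refine Measurable.ite (measurableSet_lt measurable_id measurable_const) ?_ ?_
    · exact T.hu.comp (measurable_id.add_const T.t₁)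
    · exact T'.hu.comp (measurable_id.sub_const (T.t₂ - T.t₁))
  · -- continuity of catX
    refine Continuous.if_le (T.hx.comp (continuous_id.add continuous_const))
      (T'.hx.comp (continuous_id.sub continuous_const)) continuous_id continuous_const ?_
    intro t ht
    change t = T.t₂ - T.t₁ at ht
    subst ht
    rw [sub_add_cancel, sub_self, h2]
  · -- dynamics
    intro t ht
    rw [hX0]
    rcases le_or_gt t (T.t₂ - T.t₁) with hcase | hcase
    · rw [catX_left T T' hcase, cat_intgl_left f T T' ht.1 hcase]
      have := T.hdyn (t + T.t₁) ⟨le_add_of_nonneg_left ht.1, by linarith⟩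
      rw [this]
    · have hsub : Set.uIcc (T.t₂ - T.t₁) t ⊆
          Set.uIcc (T.t₂ - T.t₁) (T.t₂ - T.t₁ + T'.t₂) := by
        rw [Set.uIcc_of_le hcase.le, Set.uIcc_of_le hdL]
        exact Set.Icc_subset_Icc le_rfl ht.2
      have hsplit := intervalIntegral.integral_add_adjacent_intervals hIf₁
        (hIf₂.mono_set hsub)
      rw [← hsplit, cat_intgl_left f T T' hd0 le_rfl, cat_intgl_right f T T' h2 hcase.le]
      have e1 : T.t₂ - T.t₁ + T.t₁ = T.t₂ := by ring
      rw [catX_right T T' h2 hcase.le, e1]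
      have e3 := T'.hdyn (t - (T.t₂ - T.t₁))
        (by rw [h1]; constructor <;> [linarith; linarith [ht.2]])
      rw [h1] at e3
      rw [e3, h2, T.hdyn T.t₂ ⟨T.hle, le_rfl⟩]
      abel
  · -- supply
    simp only [Traj.supply]
    have hsplit := intervalIntegral.integral_add_adjacent_intervals hIs₁ hIs₂
    rw [← hsplit, cat_intgl_left s T T' hd0 le_rfl, cat_intgl_right s T T' h2 hdL]
    have e1 : T.t₂ - T.t₁ + T.t₁ = T.t₂ := by ring
    rw [e1, add_sub_cancel_left, h1]

end Aux

/-- The system admits a nonnegative storage function if and only if the available storage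
`F_a(x) = sSup (Sa x)` is finite (the set `Sa x` is bounded above) for every `x`; moreover
`F_a ≥ 0`, and whenever `F_a` is finite everywhere it is the minimal nonnegative storage
function. -/
theorem nonneg_storage_iff_available_storage_finite {n m : ℕ}
    (f : (Fin n → ℝ) → (Fin m → ℝ) → (Fin n → ℝ))
    (s : (Fin n → ℝ) → (Fin m → ℝ) → ℝ)
    (hfc : Continuous fun q : (Fin n → ℝ) × (Fin m → ℝ) => f q.1 q.2)
    (hsc : Continuous fun q : (Fin n → ℝ) × (Fin m → ℝ) => s q.1 q.2) :
    ((∃ F : (Fin n → ℝ) → ℝ, (∀ x, 0 ≤ F x) ∧ IsStorage f s F) ↔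
      (∀ x, BddAbove (Sa f s x))) ∧
    (∀ x, 0 ≤ sSup (Sa f s x)) ∧
    ((∀ x, BddAbove (Sa f s x)) →
      IsStorage f s (fun x => sSup (Sa f s x)) ∧
      (∀ F : (Fin n → ℝ) → ℝ, (∀ x, 0 ≤ F x) → IsStorage f s F →
        ∀ x, sSup (Sa f s x) ≤ F x)) := by
  have h0 : ∀ x : Fin n → ℝ, (0:ℝ) ∈ Sa f s x := fun x => zero_mem_Sa x
  have hub : ∀ F : (Fin n → ℝ) → ℝ, (∀ x, 0 ≤ F x) → IsStorage f s F →
      ∀ x, F x ∈ upperBounds (Sa f s x) := by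
    intro F hF0 hFs x r hr
    obtain ⟨T, hT1, hT0, rfl⟩ := hr
    have hd := hFs T
    have h2 : T.x T.t₁ = x := by rw [hT1]; exact hT0
    rw [h2] at hd
    linarith [hF0 (T.x T.t₂)]
  have hstor : (∀ x, BddAbove (Sa f s x)) → IsStorage f s (fun x => sSup (Sa f s x)) := by
    intro hb T
    simp only
    rw [sub_le_iff_le_add]
    refine csSup_le ⟨0, h0 _⟩ ?_
    intro r hr
    obtain ⟨T', hT'1, hT'0, rfl⟩ := hr
    obtain ⟨Tc, hc1, hc0, hcs⟩ := exists_concat T T' hT'1 hT'0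
    have hmem : -Tc.supply ∈ Sa f s (T.x T.t₁) := ⟨Tc, hc1, hc0, rfl⟩
    have hle := le_csSup (hb (T.x T.t₁)) hmem
    rw [hcs] at hle
    linarith
  refine ⟨⟨?_, ?_⟩, ?_, ?_⟩
  · rintro ⟨F, hF0, hFs⟩ x
    exact ⟨F x, hub F hF0 hFs x⟩
  · intro hb
    exact ⟨fun x => sSup (Sa f s x), fun x => le_csSup (hb x) (h0 x), hstor hb⟩
  · intro x
    by_cases hb : BddAbove (Sa f s x)
    · exact le_csSup hb (h0 x)
    · rw [Real.sSup_of_not_bddAbove hb]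
  · intro hb
    exact ⟨hstor hb, fun F hF0 hFs x => csSup_le ⟨0, h0 x⟩ (fun r hr => hub F hF0 hFs x hr)⟩
end

section
/- Assume Σ is reachable from a state x*, i.e., every state can be reached from x* by a trajectory. Then Σ admits a nonnegative storage function if and only if F_a(x*) < ∞, where F_a(x) := sup{−supply : trajectories of Σ on some [0,T], T ≥ 0, with x(0) = x}. -/
open MeasureTheory

section helpers
variable {E : Type*} [NormedAddCommGroup E]

lemma ii_concat_left {g₁ g₂ : ℝ → E} {a b : ℝ} (hab : a ≤ b)
    (h1 : IntervalIntegrable g₁ volume a b) :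
    IntervalIntegrable (fun t => if t ≤ b then g₁ t else g₂ t) volume a b := by
  apply h1.congr
  intro t ht
  rw [Set.uIoc_of_le hab] at ht
  simp [ht.2]

lemma ii_concat_right {g₁ g₂ : ℝ → E} {b c : ℝ} (hbc : b ≤ c)
    (h2 : IntervalIntegrable g₂ volume b c) :
    IntervalIntegrable (fun t => if t ≤ b then g₁ t else g₂ t) volume b c := by
  apply h2.congr
  intro t ht
  rw [Set.uIoc_of_le hbc] at ht
  simp [not_le.2 ht.1]

variable [NormedSpace ℝ E]

lemma int_concat_left {g₁ g₂ : ℝ → E} {a b : ℝ} (hab : a ≤ b) :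
    ∫ t in a..b, (if t ≤ b then g₁ t else g₂ t) = ∫ t in a..b, g₁ t := by
  apply intervalIntegral.integral_congr
  intro τ hτ
  rw [Set.uIcc_of_le hab] at hτ
  simp [hτ.2]

lemma int_concat_right {g₁ g₂ : ℝ → E} {b c : ℝ} (hbc : b ≤ c) :
    ∫ t in b..c, (if t ≤ b then g₁ t else g₂ t) = ∫ t in b..c, g₂ t := by
  apply intervalIntegral.integral_congr_ae
  apply Filter.Eventually.of_forall
  intro τ hτ
  rw [Set.uIoc_of_le hbc] at hτ
  simp [not_le.2 hτ.1]

end helpers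

section traj
variable {n m : ℕ} {f : (Fin n → ℝ) → (Fin m → ℝ) → (Fin n → ℝ)}
  {s : (Fin n → ℝ) → (Fin m → ℝ) → ℝ}

/-- The trivial trajectory sitting at a point on the degenerate interval `[0,0]`. -/
def pointTraj (f : (Fin n → ℝ) → (Fin m → ℝ) → (Fin n → ℝ))
    (s : (Fin n → ℝ) → (Fin m → ℝ) → ℝ) (x0 : Fin n → ℝ) : Traj f s where
  t₁ := 0
  t₂ := 0
  hle := le_refl 0
  x := fun _ => x0
  u := fun _ => 0
  hu := measurable_const
  hx := continuous_const
  hf := intervalIntegrable_const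
  hs := intervalIntegrable_const
  hdyn := by
    intro t ht
    simp only [Set.mem_Icc] at ht
    have : t = 0 := le_antisymm ht.2 ht.1
    simp [this]

lemma pointTraj_supply (x0 : Fin n → ℝ) : (pointTraj f s x0).supply = 0 := by
  simp [Traj.supply, pointTraj]

/-- Time translation of a trajectory. -/
def Traj.shiftT (T : Traj f s) (c : ℝ) : Traj f s where
  t₁ := T.t₁ + c
  t₂ := T.t₂ + c
  hle := by linarith [T.hle]
  x := fun t => T.x (t - c)
  u := fun t => T.u (t - c)
  hu := T.hu.comp (measurable_id.sub measurable_const)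
  hx := T.hx.comp (continuous_id.sub continuous_const)
  hf := T.hf.comp_sub_right c
  hs := T.hs.comp_sub_right c
  hdyn := by
    intro t ht
    simp only [Set.mem_Icc] at ht
    have ht' : t - c ∈ Set.Icc T.t₁ T.t₂ := ⟨by linarith [ht.1], by linarith [ht.2]⟩
    show T.x (t - c) = T.x (T.t₁ + c - c) + ∫ τ in T.t₁ + c..t, f (T.x (τ - c)) (T.u (τ - c))
    rw [intervalIntegral.integral_comp_sub_right (fun τ => f (T.x τ) (T.u τ)) c,
      add_sub_cancel_right]
    exact T.hdyn (t - c) ht'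

lemma shiftT_supply (T : Traj f s) (c : ℝ) : (T.shiftT c).supply = T.supply := by
  unfold Traj.supply Traj.shiftT
  rw [intervalIntegral.integral_comp_sub_right (fun t => s (T.x t) (T.u t)) c]
  simp

/-- Concatenation of two trajectories with matching endpoints. -/
noncomputable def Traj.concatT (T T' : Traj f s) (ht : T.t₂ = T'.t₁) (hxx : T.x T.t₂ = T'.x T'.t₁) :
    Traj f s := by
  have hle2 : T.t₂ ≤ T'.t₂ := ht.le.trans T'.hle
  have hf1 : IntervalIntegrable
      (fun t => if t ≤ T.t₂ then f (T.x t) (T.u t) else f (T'.x t) (T'.u t))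
      volume T.t₁ T.t₂ := ii_concat_left T.hle T.hf
  have hf2 : IntervalIntegrable
      (fun t => if t ≤ T.t₂ then f (T.x t) (T.u t) else f (T'.x t) (T'.u t))
      volume T.t₂ T'.t₂ := ii_concat_right hle2 (by rw [ht]; exact T'.hf)
  have hrwf : (fun t => f (if t ≤ T.t₂ then T.x t else T'.x t)
        (if t ≤ T.t₂ then T.u t else T'.u t))
      = fun t => if t ≤ T.t₂ then f (T.x t) (T.u t) else f (T'.x t) (T'.u t) := by
    funext t; by_cases h : t ≤ T.t₂ <;> simp [h]
  have hrws : (fun t => s (if t ≤ T.t₂ then T.x t else T'.x t)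
        (if t ≤ T.t₂ then T.u t else T'.u t))
      = fun t => if t ≤ T.t₂ then s (T.x t) (T.u t) else s (T'.x t) (T'.u t) := by
    funext t; by_cases h : t ≤ T.t₂ <;> simp [h]
  refine
    { t₁ := T.t₁, t₂ := T'.t₂, hle := T.hle.trans hle2,
      x := fun t => if t ≤ T.t₂ then T.x t else T'.x t,
      u := fun t => if t ≤ T.t₂ then T.u t else T'.u t,
      hu := Measurable.ite (measurableSet_le measurable_id measurable_const) T.hu T'.hu,
      hx := Continuous.if_le T.hx T'.hx continuous_id continuous_const
        (fun t htt => by rw [htt]; exact hxx.trans (congrArg T'.x ht.symm)),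
      hf := ?_, hs := ?_, hdyn := ?_ }
  · rw [hrwf]; exact hf1.trans hf2
  · rw [hrws]
    exact (ii_concat_left T.hle T.hs).trans (ii_concat_right hle2 (by rw [ht]; exact T'.hs))
  · intro t htt
    simp only [Set.mem_Icc] at htt
    show (if t ≤ T.t₂ then T.x t else T'.x t)
      = (if T.t₁ ≤ T.t₂ then T.x T.t₁ else T'.x T.t₁)
        + ∫ τ in T.t₁..t, f (if τ ≤ T.t₂ then T.x τ else T'.x τ)
            (if τ ≤ T.t₂ then T.u τ else T'.u τ)
    have hrwf' : ∀ a b : ℝ, (∫ τ in a..b, f (if τ ≤ T.t₂ then T.x τ else T'.x τ)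
          (if τ ≤ T.t₂ then T.u τ else T'.u τ))
        = ∫ τ in a..b, if τ ≤ T.t₂ then f (T.x τ) (T.u τ) else f (T'.x τ) (T'.u τ) := by
      intro a b
      exact intervalIntegral.integral_congr (fun τ _ => by by_cases h : τ ≤ T.t₂ <;> simp [h])
    rw [if_pos T.hle, hrwf']
    by_cases h : t ≤ T.t₂
    · rw [if_pos h]
      have : (∫ τ in T.t₁..t,
            if τ ≤ T.t₂ then f (T.x τ) (T.u τ) else f (T'.x τ) (T'.u τ))
          = ∫ τ in T.t₁..t, f (T.x τ) (T.u τ) := by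
        apply intervalIntegral.integral_congr
        intro τ hτ
        rw [Set.uIcc_of_le htt.1] at hτ
        simp [hτ.2.trans h]
      rw [this]
      exact T.hdyn t ⟨htt.1, h⟩
    · rw [if_neg h]
      have hbt : T.t₂ ≤ t := (not_le.1 h).le
      have hg1 : IntervalIntegrable
          (fun τ => if τ ≤ T.t₂ then f (T.x τ) (T.u τ) else f (T'.x τ) (T'.u τ))
          volume T.t₁ T.t₂ := hf1
      have h2' : IntervalIntegrable (fun τ => f (T'.x τ) (T'.u τ)) volume T.t₂ t := by
        apply T'.hf.mono_set
        rw [Set.uIcc_of_le hbt, Set.uIcc_of_le T'.hle, ← ht]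
        exact Set.Icc_subset_Icc le_rfl htt.2
      have hg2 : IntervalIntegrable
          (fun τ => if τ ≤ T.t₂ then f (T.x τ) (T.u τ) else f (T'.x τ) (T'.u τ))
          volume T.t₂ t := ii_concat_right hbt h2'
      rw [← intervalIntegral.integral_add_adjacent_intervals hg1 hg2,
        int_concat_left T.hle, int_concat_right hbt]
      have e1 := T.hdyn T.t₂ ⟨T.hle, le_rfl⟩
      have e2 := T'.hdyn t ⟨by rw [← ht]; exact hbt, htt.2⟩
      rw [e2, ← hxx, e1, ← ht, add_assoc]

lemma concatT_supply (T T' : Traj f s) (ht : T.t₂ = T'.t₁) (hxx : T.x T.t₂ = T'.x T'.t₁) :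
    (T.concatT T' ht hxx).supply = T.supply + T'.supply := by
  have hle2 : T.t₂ ≤ T'.t₂ := ht.le.trans T'.hle
  have hg1 : IntervalIntegrable
      (fun t => if t ≤ T.t₂ then s (T.x t) (T.u t) else s (T'.x t) (T'.u t))
      volume T.t₁ T.t₂ := ii_concat_left T.hle T.hs
  have hg2 : IntervalIntegrable
      (fun t => if t ≤ T.t₂ then s (T.x t) (T.u t) else s (T'.x t) (T'.u t))
      volume T.t₂ T'.t₂ := ii_concat_right hle2 (by rw [ht]; exact T'.hs)
  show (∫ t in T.t₁..T'.t₂, s (if t ≤ T.t₂ then T.x t else T'.x t)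
      (if t ≤ T.t₂ then T.u t else T'.u t)) = _
  have hrw : (∫ t in T.t₁..T'.t₂, s (if t ≤ T.t₂ then T.x t else T'.x t)
        (if t ≤ T.t₂ then T.u t else T'.u t))
      = ∫ t in T.t₁..T'.t₂, if t ≤ T.t₂ then s (T.x t) (T.u t) else s (T'.x t) (T'.u t) :=
    intervalIntegral.integral_congr (fun τ _ => by by_cases h : τ ≤ T.t₂ <;> simp [h])
  rw [hrw, ← intervalIntegral.integral_add_adjacent_intervals hg1 hg2,
    int_concat_left T.hle, int_concat_right hle2]
  unfold Traj.supply
  rw [ht]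

lemma concatT_x_left (T T' : Traj f s) (ht : T.t₂ = T'.t₁) (hxx : T.x T.t₂ = T'.x T'.t₁) :
    (T.concatT T' ht hxx).x (T.concatT T' ht hxx).t₁ = T.x T.t₁ := by
  show (if T.t₁ ≤ T.t₂ then T.x T.t₁ else T'.x T.t₁) = T.x T.t₁
  exact if_pos T.hle

lemma concatT_t₁ (T T' : Traj f s) (ht : T.t₂ = T'.t₁) (hxx : T.x T.t₂ = T'.x T'.t₁) :
    (T.concatT T' ht hxx).t₁ = T.t₁ := rfl

/-- Key concatenation fact: gluing a trajectory `T` with a trajectory `T'` starting (at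
time `0`) at the endpoint of `T`, and translating time so that the result starts at `0`,
produces an element of `Sa` at the initial point of `T`. -/
lemma key_mem_Sa (T T' : Traj f s) (h1 : T'.t₁ = 0) (h2 : T'.x 0 = T.x T.t₂) :
    -T.supply - T'.supply ∈ Sa f s (T.x T.t₁) := by
  have ht : T.t₂ = (T'.shiftT T.t₂).t₁ := by
    show T.t₂ = T'.t₁ + T.t₂; rw [h1, zero_add]
  have hxx : T.x T.t₂ = (T'.shiftT T.t₂).x (T'.shiftT T.t₂).t₁ := by
    show T.x T.t₂ = T'.x (T'.t₁ + T.t₂ - T.t₂)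
    rw [add_sub_cancel_right, h1, h2]
  set C := T.concatT (T'.shiftT T.t₂) ht hxx with hC
  refine ⟨C.shiftT (-T.t₁), ?_, ?_, ?_⟩
  · show C.t₁ + -T.t₁ = 0
    rw [concatT_t₁]; ring
  · show C.x (0 - -T.t₁) = T.x T.t₁
    have h0 : (0 : ℝ) - -T.t₁ = T.t₁ := by ring
    rw [h0]
    have := concatT_x_left T (T'.shiftT T.t₂) ht hxx
    rwa [concatT_t₁] at this
  · rw [shiftT_supply, hC, concatT_supply, shiftT_supply]; ring

end traj

/-- If the system is reachable from a state `xs`, then it admits a nonnegative storage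
function if and only if the available storage `F_a(xs)` is finite, i.e. the set `Sa xs`
is bounded above. -/
theorem nonneg_storage_iff_available_storage_finite_at_ground {n m : ℕ}
    (f : (Fin n → ℝ) → (Fin m → ℝ) → (Fin n → ℝ))
    (s : (Fin n → ℝ) → (Fin m → ℝ) → ℝ)
    (hfc : Continuous fun q : (Fin n → ℝ) × (Fin m → ℝ) => f q.1 q.2)
    (hsc : Continuous fun q : (Fin n → ℝ) × (Fin m → ℝ) => s q.1 q.2)
    (xs : Fin n → ℝ)
    (hreach : ∀ x : Fin n → ℝ, ∃ T : Traj f s, T.x T.t₁ = xs ∧ T.x T.t₂ = x) :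
    (∃ F : (Fin n → ℝ) → ℝ, (∀ x, 0 ≤ F x) ∧ IsStorage f s F) ↔
      BddAbove (Sa f s xs) := by
  constructor
  · rintro ⟨F, hF0, hFs⟩
    refine ⟨F xs, fun r hr => ?_⟩
    obtain ⟨T, ht1, hx0, hr⟩ := hr
    have hst := hFs T
    have hx1 : T.x T.t₁ = xs := by rw [ht1]; exact hx0
    rw [hx1] at hst
    have := hF0 (T.x T.t₂)
    rw [hr]
    linarith
  · intro hB
    obtain ⟨M, hM⟩ := hB
    have hzero : ∀ x : Fin n → ℝ, (0 : ℝ) ∈ Sa f s x := by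
      intro x
      exact ⟨pointTraj f s x, rfl, rfl, by rw [pointTraj_supply]; ring⟩
    have hbdd : ∀ x : Fin n → ℝ, BddAbove (Sa f s x) := by
      intro x
      obtain ⟨R, hR1, hR2⟩ := hreach x
      refine ⟨M + R.supply, fun r hr => ?_⟩
      obtain ⟨T, ht1, hx0, hr⟩ := hr
      have hk := key_mem_Sa R T ht1 (by rw [hx0, hR2])
      rw [hR1] at hk
      have := hM hk
      rw [hr]; linarith
    refine ⟨fun x => sSup (Sa f s x), fun x => le_csSup (hbdd x) (hzero x), ?_⟩
    intro T
    rw [sub_le_iff_le_add]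
    apply csSup_le ⟨0, hzero _⟩
    intro r hr
    obtain ⟨T', ht1, hx0, hr⟩ := hr
    have hk := key_mem_Sa T T' ht1 hx0
    have hle := le_csSup (hbdd (T.x T.t₁)) hk
    rw [hr]; linarith
end

section
/- Let f : ℝ^n × ℝ^m → ℝ^n be continuous and locally Lipschitz in its first argument, let h : ℝ^n × ℝ^m → ℝ^k be continuous, and let s : ℝ^m × ℝ^k → ℝ be a continuous supply rate. A continuously differentiable function F : ℝ^n → ℝ satisfies the dissipation inequality F(x(t₂)) − F(x(t₁)) ≤ ∫_{t₁}^{t₂} s(u(t), h(x(t),u(t))) dt along every smooth trajectory if and only if the differential dissipation inequality ⟨∇F(x), f(x,u)⟩ ≤ s(u, h(x,u)) holds for all (x,u) ∈ ℝ^n × ℝ^m; the same equivalence holds with both inequalities replaced by equalities. -/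
open MeasureTheory

/-- Local existence of solutions for a continuous, locally Lipschitz vector field. -/
lemma exists_local_flow_aux {E : Type*} [NormedAddCommGroup E] [NormedSpace ℝ E]
    [CompleteSpace E] {v : E → E} (hc : Continuous v) (hl : LocallyLipschitz v) (x₀ : E) :
    ∃ x : ℝ → E, x 0 = x₀ ∧ ∃ δ > (0:ℝ), ∀ t ∈ Set.Icc 0 δ, HasDerivAt x (v (x t)) t := by
  obtain ⟨L, s, hs, hlip⟩ := hl x₀
  obtain ⟨R₁, hR₁, hball⟩ := Metric.mem_nhds_iff.mp hs
  obtain ⟨R₂, hR₂, hbdd⟩ := Metric.continuousAt_iff.mp (hc.norm.continuousAt (x := x₀)) 1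
    zero_lt_one
  have hbdd' : ∀ y ∈ Metric.ball x₀ R₂, ‖v y‖ ≤ 1 + ‖v x₀‖ := fun y hy =>
    sub_le_iff_le_add.mp <| le_of_lt <| lt_of_abs_lt <| Real.dist_eq _ _ ▸ hbdd hy
  set ε := min R₁ R₂ / 2 / (1 + ‖v x₀‖) with hε
  have hε0 : 0 < ε := hε ▸ div_pos (half_pos <| lt_min hR₁ hR₂)
    (add_pos_of_pos_of_nonneg zero_lt_one (norm_nonneg _))
  have hpl : IsPicardLindelof (fun _ : ℝ => v) (tmin := -ε) (tmax := ε)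
      ⟨0, by constructor <;> linarith⟩ x₀ ⟨min R₁ R₂ / 2, by positivity⟩ 0
      ⟨1 + ‖v x₀‖, by positivity⟩ L :=
    { lipschitzOnWith := fun _ _ => hlip.mono <|
        (Metric.closedBall_subset_ball <| half_lt_self <| lt_min hR₁ hR₂).trans <|
        (Metric.ball_subset_ball <| min_le_left _ _).trans hball
      continuousOn := fun _ _ => continuousOn_const
      norm_le := fun _ _ y hy => hbdd' y <| Set.mem_of_mem_of_subset hy <|
        (Metric.closedBall_subset_ball <| half_lt_self <| lt_min hR₁ hR₂).trans <|
        Metric.ball_subset_ball <| min_le_right _ _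
      mul_max_le := by
        show (1 + ‖v x₀‖) * max (ε - 0) (0 - -ε) ≤ min R₁ R₂ / 2 - 0
        rw [sub_zero, sub_zero, zero_sub, neg_neg, max_self, hε, mul_div_left_comm, div_self, mul_one]
        exact ne_of_gt <| add_pos_of_pos_of_nonneg zero_lt_one <| norm_nonneg _ }
  obtain ⟨x, hx0, hx⟩ := hpl.exists_eq_forall_mem_Icc_hasDerivWithinAt₀
  refine ⟨x, hx0, ε / 2, half_pos hε0, fun t ht => ?_⟩
  exact (hx t ⟨by linarith [ht.1], by linarith [ht.2]⟩).hasDerivAt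
    (Icc_mem_nhds (by linarith [ht.1]) (by linarith [ht.2]))

/-- Key equivalence in the inequality form. -/
lemma dissipation_key {n m k : ℕ}
    (f : (Fin n → ℝ) → (Fin m → ℝ) → (Fin n → ℝ))
    (h : (Fin n → ℝ) → (Fin m → ℝ) → (Fin k → ℝ))
    (s : (Fin m → ℝ) → (Fin k → ℝ) → ℝ)
    (hfc : Continuous fun q : (Fin n → ℝ) × (Fin m → ℝ) => f q.1 q.2)
    (hfl : ∀ u : Fin m → ℝ, LocallyLipschitz fun x => f x u)
    (hhc : Continuous fun q : (Fin n → ℝ) × (Fin m → ℝ) => h q.1 q.2)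
    (hsc : Continuous fun q : (Fin m → ℝ) × (Fin k → ℝ) => s q.1 q.2)
    (F : (Fin n → ℝ) → ℝ) (hF : ContDiff ℝ 1 F) :
    (∀ (t₁ t₂ : ℝ), t₁ ≤ t₂ →
        ∀ (x : ℝ → Fin n → ℝ) (u : ℝ → Fin m → ℝ), Continuous u →
          (∀ t ∈ Set.Icc t₁ t₂, HasDerivAt x (f (x t) (u t)) t) →
          F (x t₂) - F (x t₁) ≤ ∫ t in t₁..t₂, s (u t) (h (x t) (u t))) ↔
      (∀ (x : Fin n → ℝ) (u : Fin m → ℝ), fderiv ℝ F x (f x u) ≤ s u (h x u)) := by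
  have hΦ : Continuous fun p : (Fin n → ℝ) × (Fin m → ℝ) => fderiv ℝ F p.1 (f p.1 p.2) :=
    isBoundedBilinearMap_apply.continuous.comp
      (((hF.continuous_fderiv one_ne_zero).comp continuous_fst).prodMk hfc)
  have hΨ : Continuous fun p : (Fin n → ℝ) × (Fin m → ℝ) => s p.2 (h p.1 p.2) :=
    hsc.comp (continuous_snd.prodMk hhc)
  constructor
  · -- integral inequality ⇒ differential inequality
    intro hi x₀ u₀
    have hvc : Continuous fun y => f y u₀ := hfc.comp (continuous_id.prodMk continuous_const)
    obtain ⟨x, hx0, δ, hδ, hx⟩ := exists_local_flow_aux hvc (hfl u₀) x₀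
    set ψ : ℝ → ℝ := fun τ => s u₀ (h (x τ) u₀) with hψ
    have hxc : ContinuousOn x (Set.Icc 0 δ) := fun t ht =>
      ((hx t ht).continuousAt).continuousWithinAt
    have hψc : ContinuousOn ψ (Set.Icc 0 δ) :=
      (hsc.comp (continuous_const.prodMk
        (hhc.comp (continuous_id.prodMk continuous_const)))).comp_continuousOn hxc
    set φ : ℝ → ℝ := fun t => (∫ τ in (0:ℝ)..t, ψ τ) - (F (x t) - F x₀) with hφdef
    have hφ0 : φ 0 = 0 := by simp [hφdef, hx0]
    have hnn : ∀ t ∈ Set.Icc 0 δ, 0 ≤ φ t := by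
      intro t ht
      have := hi 0 t ht.1 x (fun _ => u₀) continuous_const
        (fun τ hτ => hx τ ⟨hτ.1, hτ.2.trans ht.2⟩)
      rw [hx0] at this
      exact sub_nonneg.2 this
    -- derivative of the integral term at 0 from the right
    have hG : HasDerivWithinAt (fun t => ∫ τ in (0:ℝ)..t, ψ τ) (ψ 0) (Set.Icc 0 δ) 0 := by
      have hmeas : StronglyMeasurableAtFilter ψ (nhdsWithin 0 (Set.Ioi 0)) volume :=
        ⟨Set.Ioc 0 δ, Ioc_mem_nhdsGT hδ,
          (hψc.mono Set.Ioc_subset_Icc_self).aestronglyMeasurable measurableSet_Ioc⟩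
      have hcw : ContinuousWithinAt ψ (Set.Ioi 0) 0 := by
        have h1 : ContinuousWithinAt ψ (Set.Ioc 0 δ) 0 :=
          (hψc 0 ⟨le_rfl, hδ.le⟩).mono Set.Ioc_subset_Icc_self
        rwa [ContinuousWithinAt, nhdsWithin_Ioc_eq_nhdsGT hδ] at h1
      exact (intervalIntegral.integral_hasDerivWithinAt_right
        (s := Set.Ici 0) (t := Set.Ioi 0)
        (IntervalIntegrable.refl) hmeas hcw).mono Set.Icc_subset_Ici_self
    -- derivative of t ↦ F (x t) at 0
    have hx0' : HasDerivAt x (f x₀ u₀) 0 := by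
      have := hx 0 ⟨le_rfl, hδ.le⟩; rwa [hx0] at this
    have hg : HasDerivAt (fun t => F (x t)) (fderiv ℝ F x₀ (f x₀ u₀)) 0 := by
      have hFd : HasFDerivAt F (fderiv ℝ F x₀) (x 0) := by
        rw [hx0]; exact (hF.differentiable one_ne_zero x₀).hasFDerivAt
      exact hFd.comp_hasDerivAt 0 hx0'
    have hφ' : HasDerivWithinAt φ (ψ 0 - fderiv ℝ F x₀ (f x₀ u₀)) (Set.Icc 0 δ) 0 :=
      hG.sub ((hg.sub_const (F x₀)).hasDerivWithinAt)
    rw [hasDerivWithinAt_iff_tendsto_slope, Set.Icc_diff_left] at hφ'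
    haveI : (nhdsWithin (0:ℝ) (Set.Ioc 0 δ)).NeBot := by
      rw [nhdsWithin_Ioc_eq_nhdsGT hδ]; infer_instance
    have h0le : 0 ≤ ψ 0 - fderiv ℝ F x₀ (f x₀ u₀) := by
      refine ge_of_tendsto hφ' ?_
      filter_upwards [self_mem_nhdsWithin] with t ht
      rw [slope_def_field, hφ0, sub_zero, sub_zero]
      exact div_nonneg (hnn t (Set.Ioc_subset_Icc_self ht)) ht.1.le
    have : ψ 0 = s u₀ (h x₀ u₀) := by rw [hψ]; simp [hx0]
    linarith [h0le, this ▸ h0le]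
  · -- differential inequality ⇒ integral inequality
    intro hd t₁ t₂ ht x u hu hx
    have hxc : ContinuousOn x (Set.Icc t₁ t₂) := fun t ht' =>
      ((hx t ht').continuousAt).continuousWithinAt
    have hpair : ContinuousOn (fun t => (x t, u t)) (Set.Icc t₁ t₂) :=
      hxc.prodMk hu.continuousOn
    have hφc : ContinuousOn (fun t => fderiv ℝ F (x t) (f (x t) (u t))) (Set.Icc t₁ t₂) :=
      hΦ.comp_continuousOn hpair
    have hψc : ContinuousOn (fun t => s (u t) (h (x t) (u t))) (Set.Icc t₁ t₂) :=
      hΨ.comp_continuousOn hpair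
    have huIcc : Set.uIcc t₁ t₂ = Set.Icc t₁ t₂ := Set.uIcc_of_le ht
    have hφi : IntervalIntegrable (fun t => fderiv ℝ F (x t) (f (x t) (u t))) volume t₁ t₂ :=
      (huIcc ▸ hφc).intervalIntegrable
    have hψi : IntervalIntegrable (fun t => s (u t) (h (x t) (u t))) volume t₁ t₂ :=
      (huIcc ▸ hψc).intervalIntegrable
    have hchain : ∀ t ∈ Set.uIcc t₁ t₂,
        HasDerivAt (fun τ => F (x τ)) (fderiv ℝ F (x t) (f (x t) (u t))) t := by
      intro t ht'
      rw [huIcc] at ht'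
      exact ((hF.differentiable one_ne_zero (x t)).hasFDerivAt).comp_hasDerivAt t (hx t ht')
    have hFTC := intervalIntegral.integral_eq_sub_of_hasDerivAt hchain hφi
    rw [← hFTC]
    exact intervalIntegral.integral_mono_on ht hφi hψi fun t ht' => hd (x t) (u t)

/-- A C¹ function `F` satisfies the integral dissipation inequality along every smooth
trajectory of `ẋ = f(x,u)`, `y = h(x,u)` if and only if it satisfies the differential
dissipation inequality `⟨∇F(x), f(x,u)⟩ ≤ s(u, h(x,u))` for all `(x,u)`; and the same
equivalence holds with both inequalities replaced by equalities. -/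
theorem dissipation_inequality_iff_differential {n m k : ℕ}
    (f : (Fin n → ℝ) → (Fin m → ℝ) → (Fin n → ℝ))
    (h : (Fin n → ℝ) → (Fin m → ℝ) → (Fin k → ℝ))
    (s : (Fin m → ℝ) → (Fin k → ℝ) → ℝ)
    (hfc : Continuous fun q : (Fin n → ℝ) × (Fin m → ℝ) => f q.1 q.2)
    (hfl : ∀ u : Fin m → ℝ, LocallyLipschitz fun x => f x u)
    (hhc : Continuous fun q : (Fin n → ℝ) × (Fin m → ℝ) => h q.1 q.2)
    (hsc : Continuous fun q : (Fin m → ℝ) × (Fin k → ℝ) => s q.1 q.2)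
    (F : (Fin n → ℝ) → ℝ) (hF : ContDiff ℝ 1 F) :
    ((∀ (t₁ t₂ : ℝ), t₁ ≤ t₂ →
        ∀ (x : ℝ → Fin n → ℝ) (u : ℝ → Fin m → ℝ), Continuous u →
          (∀ t ∈ Set.Icc t₁ t₂, HasDerivAt x (f (x t) (u t)) t) →
          F (x t₂) - F (x t₁) ≤ ∫ t in t₁..t₂, s (u t) (h (x t) (u t))) ↔
      (∀ (x : Fin n → ℝ) (u : Fin m → ℝ), fderiv ℝ F x (f x u) ≤ s u (h x u))) ∧
    ((∀ (t₁ t₂ : ℝ), t₁ ≤ t₂ →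
        ∀ (x : ℝ → Fin n → ℝ) (u : ℝ → Fin m → ℝ), Continuous u →
          (∀ t ∈ Set.Icc t₁ t₂, HasDerivAt x (f (x t) (u t)) t) →
          F (x t₂) - F (x t₁) = ∫ t in t₁..t₂, s (u t) (h (x t) (u t))) ↔
      (∀ (x : Fin n → ℝ) (u : Fin m → ℝ), fderiv ℝ F x (f x u) = s u (h x u))) := by
  have key := dissipation_key f h s hfc hfl hhc hsc F hF
  have keyneg := dissipation_key f h (fun a b => -(s a b)) hfc hfl hhc hsc.neg
    (fun y => -(F y)) hF.neg
  have hfd : ∀ (x : Fin n → ℝ) (u : Fin m → ℝ),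
      fderiv ℝ (fun y => -(F y)) x (f x u) = -(fderiv ℝ F x (f x u)) := by
    intro x u; rw [fderiv_fun_neg]; rfl
  refine ⟨key, ?_⟩
  constructor
  · intro hE
    intro x u
    have h1 : fderiv ℝ F x (f x u) ≤ s u (h x u) := by
      refine key.mp (fun t₁ t₂ ht xx uu hu hx => (hE t₁ t₂ ht xx uu hu hx).le) x u
    have h2 : -(fderiv ℝ F x (f x u)) ≤ -(s u (h x u)) := by
      have := keyneg.mp (fun t₁ t₂ ht xx uu hu hx => ?_) x u
      · rwa [hfd] at this
      · have hEq := hE t₁ t₂ ht xx uu hu hx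
        show -F (xx t₂) - -F (xx t₁) ≤ ∫ t in t₁..t₂, -(s (uu t) (h (xx t) (uu t)))
        rw [intervalIntegral.integral_neg]
        linarith
    linarith
  · intro hd t₁ t₂ ht x u hu hx
    have h1 := key.mpr (fun x u => (hd x u).le) t₁ t₂ ht x u hu hx
    have h2 := keyneg.mpr (fun x u => by rw [hfd]; exact (neg_le_neg (hd x u).ge)) t₁ t₂ ht x u hu hx
    have h2' : -F (x t₂) - -F (x t₁) ≤ ∫ t in t₁..t₂, -(s (u t) (h (x t) (u t))) := h2
    rw [intervalIntegral.integral_neg] at h2'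
    linarith
end

section
/- For every γ ∈ ℝ^c one has γᵀ 𝕃 Exp(γ) ≥ 0, and γᵀ 𝕃 Exp(γ) = 0 if and only if Bᵀγ = 0. -/
open Matrix

private lemma exp_diff_nonneg (a b : ℝ) : 0 ≤ (a - b) * (Real.exp a - Real.exp b) := by
  rcases le_total a b with h | h <;> have he := Real.exp_le_exp.mpr h <;> nlinarith

private lemma exp_diff_eq_zero {a b : ℝ} (h : (a - b) * (Real.exp a - Real.exp b) = 0) :
    a = b := by
  rcases mul_eq_zero.mp h with h | h
  · linarith
  · exact Real.exp_injective (by linarith)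

/-- For the weighted Laplacian `𝕃 = B 𝒦 Bᵀ` of a directed graph (with `B` an incidence
matrix and `𝒦` a positive diagonal matrix of conductances), one has
`γᵀ 𝕃 Exp(γ) ≥ 0` for all `γ`, with equality if and only if `Bᵀ γ = 0`. -/
theorem laplacian_exp_nonneg {c r : ℕ}
    (B : Matrix (Fin c) (Fin r) ℝ)
    (hB : ∀ j : Fin r, ∃ ip im : Fin c, ip ≠ im ∧ B ip j = 1 ∧ B im j = -1 ∧
      ∀ i : Fin c, i ≠ ip → i ≠ im → B i j = 0)
    (κ : Fin r → ℝ) (hκ : ∀ j, 0 < κ j)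
    (γ : Fin c → ℝ) :
    0 ≤ γ ⬝ᵥ ((B * Matrix.diagonal κ * Bᵀ) *ᵥ fun i => Real.exp (γ i)) ∧
    (γ ⬝ᵥ ((B * Matrix.diagonal κ * Bᵀ) *ᵥ fun i => Real.exp (γ i)) = 0 ↔
      Bᵀ *ᵥ γ = 0) := by
  set v : Fin c → ℝ := fun i => Real.exp (γ i) with hv
  -- rewrite the quadratic form as a sum over edges
  have key : γ ⬝ᵥ ((B * Matrix.diagonal κ * Bᵀ) *ᵥ v) =
      ∑ j, κ j * ((Bᵀ *ᵥ γ) j * (Bᵀ *ᵥ v) j) := by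
    rw [← Matrix.mulVec_mulVec, ← Matrix.mulVec_mulVec, Matrix.dotProduct_mulVec,
      ← Matrix.mulVec_transpose]
    simp [dotProduct, Matrix.mulVec_diagonal, mul_comm, mul_left_comm]
  -- each edge term
  have hterm : ∀ j : Fin r, ∃ ip im : Fin c, ip ≠ im ∧
      (Bᵀ *ᵥ γ) j = γ ip - γ im ∧ (Bᵀ *ᵥ v) j = v ip - v im := by
    intro j
    obtain ⟨ip, im, hne, hp, hm, h0⟩ := hB j
    refine ⟨ip, im, hne, ?_, ?_⟩ <;>
    · show ∑ i, B i j * _ = _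
      rw [Finset.sum_eq_add ip im hne (fun k _ h => by simp [h0 k h.1 h.2])
        (by simp) (by simp)]
      simp [hp, hm]; ring
  have hnn : ∀ j : Fin r, 0 ≤ κ j * ((Bᵀ *ᵥ γ) j * (Bᵀ *ᵥ v) j) := by
    intro j
    obtain ⟨ip, im, _, h1, h2⟩ := hterm j
    rw [h1, h2]
    exact mul_nonneg (hκ j).le (exp_diff_nonneg _ _)
  constructor
  · rw [key]
    exact Finset.sum_nonneg fun j _ => hnn j
  · rw [key]
    rw [Finset.sum_eq_zero_iff_of_nonneg fun j _ => hnn j]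
    constructor
    · intro h
      funext j
      obtain ⟨ip, im, _, h1, h2⟩ := hterm j
      have := h j (Finset.mem_univ j)
      rw [h1, h2] at this
      have h3 : (γ ip - γ im) * (v ip - v im) = 0 := by
        rcases mul_eq_zero.mp this with hc | hc
        · exact absurd hc (hκ j).ne'
        · exact hc
      have := exp_diff_eq_zero (a := γ ip) (b := γ im) h3
      simp [Pi.zero_apply, h1, this]
    · intro h j _
      have : (Bᵀ *ᵥ γ) j = 0 := by rw [h]; rfl
      simp [this]
end

section
/- For every vector of chemical potentials μ ∈ ℝ^m, the irreversible entropy production σ := (1/T) μᵀ Z 𝕃 Exp(Zᵀμ/(RT)) satisfies σ ≥ 0, and σ = 0 if and only if the vector of chemical affinities vanishes, Nᵀμ = 0, where N = ZB is the stoichiometric matrix. -/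
open Matrix

lemma key_sign (a u v : ℝ) (ha : 0 < a) :
    0 ≤ (u - v) * (Real.exp (a * u) - Real.exp (a * v)) ∧
    ((u - v) * (Real.exp (a * u) - Real.exp (a * v)) = 0 ↔ u - v = 0) := by
  rcases lt_trichotomy u v with h | h | h
  · have h1 : u - v < 0 := by linarith
    have h2 : Real.exp (a * u) < Real.exp (a * v) := Real.exp_lt_exp.2 (by nlinarith)
    have hp : 0 < (u - v) * (Real.exp (a * u) - Real.exp (a * v)) := by nlinarith
    exact ⟨hp.le, by constructor <;> intro he <;> [linarith; linarith]⟩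
  · simp [h]
  · have h1 : 0 < u - v := by linarith
    have h2 : Real.exp (a * v) < Real.exp (a * u) := Real.exp_lt_exp.2 (by nlinarith)
    have hp : 0 < (u - v) * (Real.exp (a * u) - Real.exp (a * v)) := by nlinarith
    exact ⟨hp.le, by constructor <;> intro he <;> [linarith; linarith]⟩

/-- For an isolated chemical reaction network with complex composition matrix `Z`,
incidence matrix `B`, weighted Laplacian `𝕃 = B 𝒦 Bᵀ` and stoichiometric matrix
`N = Z B`, the irreversible entropy production
`σ = (1/T) μᵀ Z 𝕃 Exp(Zᵀμ/(RT))` is nonnegative for every vector of chemical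
potentials `μ`, and vanishes if and only if the chemical affinities vanish: `Nᵀ μ = 0`. -/
theorem entropy_production_nonneg {c r m : ℕ}
    (B : Matrix (Fin c) (Fin r) ℝ)
    (hB : ∀ j : Fin r, ∃ ip im : Fin c, ip ≠ im ∧ B ip j = 1 ∧ B im j = -1 ∧
      ∀ i : Fin c, i ≠ ip → i ≠ im → B i j = 0)
    (κ : Fin r → ℝ) (hκ : ∀ j, 0 < κ j)
    (Z : Matrix (Fin m) (Fin c) ℝ)
    (R T : ℝ) (hR : 0 < R) (hT : 0 < T)
    (μ : Fin m → ℝ) :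
    0 ≤ (1 / T) * (μ ⬝ᵥ (Z *ᵥ ((B * Matrix.diagonal κ * Bᵀ) *ᵥ
        fun i => Real.exp ((1 / (R * T)) * (Zᵀ *ᵥ μ) i)))) ∧
    ((1 / T) * (μ ⬝ᵥ (Z *ᵥ ((B * Matrix.diagonal κ * Bᵀ) *ᵥ
        fun i => Real.exp ((1 / (R * T)) * (Zᵀ *ᵥ μ) i)))) = 0 ↔
      (Z * B)ᵀ *ᵥ μ = 0) := by
  set x := Zᵀ *ᵥ μ with hx
  set a := 1 / (R * T) with haa
  have ha : 0 < a := by positivity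
  set e : Fin c → ℝ := fun i => Real.exp (a * x i) with he
  -- rewrite the quadratic form
  have hrw : μ ⬝ᵥ (Z *ᵥ ((B * Matrix.diagonal κ * Bᵀ) *ᵥ e)) =
      ∑ j, (Bᵀ *ᵥ x) j * (κ j * (Bᵀ *ᵥ e) j) := by
    have h1 : μ ⬝ᵥ (Z *ᵥ ((B * Matrix.diagonal κ * Bᵀ) *ᵥ e)) =
        x ⬝ᵥ ((B * Matrix.diagonal κ * Bᵀ) *ᵥ e) := by
      rw [dotProduct_mulVec, ← mulVec_transpose]
    rw [h1, Matrix.mul_assoc, ← mulVec_mulVec, dotProduct_mulVec, ← mulVec_transpose,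
      ← mulVec_mulVec]
    simp [dotProduct, mulVec_diagonal]
  -- each term of the sum
  have hterm : ∀ j, 0 ≤ (Bᵀ *ᵥ x) j * (κ j * (Bᵀ *ᵥ e) j) ∧
      ((Bᵀ *ᵥ x) j * (κ j * (Bᵀ *ᵥ e) j) = 0 ↔ (Bᵀ *ᵥ x) j = 0) := by
    intro j
    obtain ⟨ip, im, hne, hip, him, hz⟩ := hB j
    have hxj : (Bᵀ *ᵥ x) j = x ip - x im := by
      have : (Bᵀ *ᵥ x) j = ∑ i, B i j * x i := by
        simp [mulVec, dotProduct, transpose_apply]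
      rw [this, Finset.sum_eq_add_of_mem ip im (Finset.mem_univ _) (Finset.mem_univ _) hne
        (fun k _ hk => by simp [hz k hk.1 hk.2])]
      rw [hip, him]; ring
    have hej : (Bᵀ *ᵥ e) j = e ip - e im := by
      have : (Bᵀ *ᵥ e) j = ∑ i, B i j * e i := by
        simp [mulVec, dotProduct, transpose_apply]
      rw [this, Finset.sum_eq_add_of_mem ip im (Finset.mem_univ _) (Finset.mem_univ _) hne
        (fun k _ hk => by simp [hz k hk.1 hk.2])]
      rw [hip, him]; ring
    obtain ⟨hpos, hiff⟩ := key_sign a (x ip) (x im) ha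
    rw [hxj, hej]
    constructor
    · have := hκ j
      nlinarith
    · constructor
      · intro h0
        rcases mul_eq_zero.1 h0 with h | h
        · exact h
        · rcases mul_eq_zero.1 h with h | h
          · exact absurd h (hκ j).ne'
          · have : e ip = e im := by linarith [sub_eq_zero.1 h]
            have hxx : x ip = x im := by
              have h2 : Real.exp (a * x ip) = Real.exp (a * x im) := by
                simpa [he] using this
              exact mul_left_cancel₀ ha.ne' (Real.exp_injective h2)
            simp [hxx]
      · intro h0
        rw [h0, zero_mul]
  -- affinity identity
  have haff : (Z * B)ᵀ *ᵥ μ = Bᵀ *ᵥ x := by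
    rw [transpose_mul, ← mulVec_mulVec]
  have hsumnn : 0 ≤ ∑ j, (Bᵀ *ᵥ x) j * (κ j * (Bᵀ *ᵥ e) j) :=
    Finset.sum_nonneg fun j _ => (hterm j).1
  constructor
  · rw [hrw]; positivity
  · rw [hrw, haff]
    have hT' : (1 / T) ≠ 0 := by positivity
    rw [mul_eq_zero]
    constructor
    · rintro (h | h)
      · exact absurd h hT'
      · funext j
        have := (Finset.sum_eq_zero_iff_of_nonneg (fun j _ => (hterm j).1)).1 h j
          (Finset.mem_univ j)
        exact (hterm j).2.1 this
    · intro h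
      right
      apply Finset.sum_eq_zero
      intro j _
      exact (hterm j).2.2 (congrFun h j)
end

section
/- Let f : ℝ^n → ℝ^n, g : ℝ^n → ℝ^{n×m}, h : ℝ^n → ℝ^m be continuous, H : ℝ^n → ℝ be C¹, and suppose the cyclo-passivity conditions hold: ∇H(x)ᵀ f(x) = −ρ(x) with ρ(x) ≥ 0 for all x, and ∇H(x)ᵀ g(x) = h(x)ᵀ for all x. Let U : ℝ → ℝ be C¹ with U'(S) > 0 for all S. Then along every differentiable solution (x(t), S(t)) of the extended system ẋ = f(x) + g(x)u, Ṡ = ρ(x)/U'(S) (with u : ℝ → ℝ^m continuous), the total energy E(x,S) := H(x) + U(S) satisfies d/dt E(x(t),S(t)) = h(x(t))ᵀ u(t) for all t (First Law: cyclo-losslessness with respect to the supply rate yᵀu with y = h(x)), and d/dt S(t) ≥ 0 for all t (Second Law). -/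
open Matrix

/-- A cyclo-passive input-state-output system `ẋ = f(x) + g(x)u`, `y = h(x)` with C¹
storage function `H` satisfying `∇Hᵀf = −ρ ≤ 0` and `∇Hᵀg = hᵀ`, extended with an
entropy variable `Ṡ = ρ(x)/U'(S)`, is cyclo-lossless for the total energy
`E(x,S) = H(x) + U(S)`: along every solution, `d/dt E = h(x)ᵀu` (First Law) and
`d/dt S ≥ 0` (Second Law). -/
theorem cycloPassive_extension_first_second_law {n m : ℕ}
    (f : (Fin n → ℝ) → (Fin n → ℝ))
    (g : (Fin n → ℝ) → Matrix (Fin n) (Fin m) ℝ)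
    (h : (Fin n → ℝ) → (Fin m → ℝ))
    (hfc : Continuous f) (hgc : Continuous g) (hhc : Continuous h)
    (H : (Fin n → ℝ) → ℝ) (hH : ContDiff ℝ 1 H)
    (ρ : (Fin n → ℝ) → ℝ)
    (hρf : ∀ x, fderiv ℝ H x (f x) = -ρ x)
    (hρ0 : ∀ x, 0 ≤ ρ x)
    (hg : ∀ (x : Fin n → ℝ) (v : Fin m → ℝ), fderiv ℝ H x (g x *ᵥ v) = h x ⬝ᵥ v)
    (U : ℝ → ℝ) (hU : ContDiff ℝ 1 U) (hU' : ∀ S, 0 < deriv U S)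
    (x : ℝ → Fin n → ℝ) (S : ℝ → ℝ) (u : ℝ → Fin m → ℝ) (huc : Continuous u)
    (hx : ∀ t, HasDerivAt x (f (x t) + g (x t) *ᵥ u t) t)
    (hS : ∀ t, HasDerivAt S (ρ (x t) / deriv U (S t)) t) :
    (∀ t, HasDerivAt (fun τ => H (x τ) + U (S τ)) (h (x t) ⬝ᵥ u t) t) ∧
    (∀ t, 0 ≤ deriv S t) := by
  constructor
  · intro t
    have hHd : HasFDerivAt H (fderiv ℝ H (x t)) (x t) :=
      (hH.differentiable one_ne_zero (x t)).hasFDerivAt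
    have h1 : HasDerivAt (fun τ => H (x τ))
        (fderiv ℝ H (x t) (f (x t) + g (x t) *ᵥ u t)) t :=
      hHd.comp_hasDerivAt t (hx t)
    have hUd : HasDerivAt U (deriv U (S t)) (S t) :=
      (hU.differentiable one_ne_zero (S t)).hasDerivAt
    have h2 : HasDerivAt (fun τ => U (S τ))
        (deriv U (S t) * (ρ (x t) / deriv U (S t))) t :=
      hUd.comp t (hS t)
    have h2' : deriv U (S t) * (ρ (x t) / deriv U (S t)) = ρ (x t) := by
      field_simp [(hU' (S t)).ne']
    have h1' : fderiv ℝ H (x t) (f (x t) + g (x t) *ᵥ u t)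
        = -ρ (x t) + h (x t) ⬝ᵥ u t := by
      rw [map_add, hρf, hg]
    have := h1.add h2
    rw [h1', h2'] at this
    exact this.congr_deriv (by ring)
  · intro t
    rw [(hS t).deriv]
    exact div_nonneg (hρ0 (x t)) (hU' (S t)).le
end
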